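/- For every positive integer n, the number of semistandard Young tableaux of shape λ_n = (n, n−1, n−1, …, 2, 2, 1, 1) with entries from {1,…,2n+1} equals 3^{n(n−1)/2} · ∏_{i=0}^{n} (3i)!/(n+i)!; equivalently, |SSYT_{λ_n}(2n+1)| · ∏_{i=0}^{n} (n+i)! = 3^{n(n−1)/2} · ∏_{i=0}^{n} (3i)!. -/

import Mathlib

/-- The Young diagram of the partition `(n, n-1, n-1, ..., 2, 2, 1, 1)` (of length `2n-1`,
with first part `n` and with parts `2j` and `2j+1` both equal to `n-j` for `j = 1, …, n-1`):
row `i` (0-based) has length `n - (i+1)/2`. -/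
def lambdaShape (n : ℕ) : YoungDiagram where
  cells := (Finset.range (2*n) ×ˢ Finset.range n).filter fun p => p.2 < n - (p.1 + 1) / 2
  isLowerSet := by
    intro a b hba ha
    have h1 : b.1 ≤ a.1 := (Prod.le_def.mp hba).1
    have h2 : b.2 ≤ a.2 := (Prod.le_def.mp hba).2
    simp only [Finset.mem_coe, Finset.mem_filter, Finset.mem_product, Finset.mem_range] at ha ⊢
    have hd : (b.1 + 1) / 2 ≤ (a.1 + 1) / 2 := Nat.div_le_div_right (by omega)
    omega
/-- The set of semistandard Young tableaux of shape `μ` with entries from `{1, …, k}`. -/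
def ssytSet (μ : YoungDiagram) (k : ℕ) : Set (SemistandardYoungTableau μ) :=
  {T | ∀ i j, (i, j) ∈ μ → 1 ≤ T i j ∧ T i j ≤ k}

/-- The number of semistandard Young tableaux of shape `μ` with entries from `{1, …, k}`. -/
noncomputable def ssytCount (μ : YoungDiagram) (k : ℕ) : ℕ := (ssytSet μ k).ncard


open Finset

/-- enumeration of `{x : x % 3 ≠ 2}` in increasing order -/
def sfun (t : ℕ) : ℕ := 3 * (t / 2) + t % 2

lemma sfun_mono : StrictMono sfun := by
  apply strictMono_nat_of_lt_succ
  intro t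
  unfold sfun
  omega

/-- the double product of differences -/
def Dn (n : ℕ) : ℕ := ∏ a ∈ range (2 * n + 1), ∏ b ∈ range a, (sfun a - sfun b)

lemma odd_split (M : ℕ) (f : ℕ → ℕ) :
    ∏ j ∈ range (2 * M + 1), f (sfun j) =
      (∏ m ∈ range (M + 1), f (3 * m)) * ∏ m ∈ range M, f (3 * m + 1) := by
  induction M with
  | zero => simp [sfun]
  | succ M ih =>
    have h1 : 2 * (M + 1) + 1 = (2 * M + 1) + 1 + 1 := by ring
    rw [h1, prod_range_succ, prod_range_succ, ih]
    have h2 : sfun (2 * M + 1) = 3 * M + 1 := by unfold sfun; omega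
    have h3 : sfun (2 * M + 1 + 1) = 3 * (M + 1) := by unfold sfun; omega
    rw [h2, h3, prod_range_succ (fun m => f (3 * m)) (M + 1),
      prod_range_succ (fun m => f (3 * m)) M, prod_range_succ (fun m => f (3 * m + 1)) M]
    ring

lemma even_split (M : ℕ) (f : ℕ → ℕ) :
    ∏ j ∈ range (2 * M + 2), f (sfun j) =
      (∏ m ∈ range (M + 1), f (3 * m)) * ∏ m ∈ range (M + 1), f (3 * m + 1) := by
  have h1 : 2 * M + 2 = (2 * M + 1) + 1 := by ring
  rw [h1, prod_range_succ, odd_split]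
  have h2 : sfun (2 * M + 1) = 3 * M + 1 := by unfold sfun; omega
  rw [h2, prod_range_succ (fun m => f (3 * m + 1)) M]
  ring

lemma prod_three_mul (n : ℕ) : ∏ j ∈ range n, (3 * (j + 1)) = 3 ^ n * n.factorial := by
  induction n with
  | zero => simp
  | succ n ih =>
    rw [prod_range_succ, ih, pow_succ, Nat.factorial_succ]
    ring

lemma G1_eval (n : ℕ) :
    ∏ j ∈ range (2 * n + 1), (3 * n + 1 - sfun j) =
      (∏ m ∈ range (n + 1), (3 * m + 1)) * (3 ^ n * n.factorial) := by
  rw [odd_split]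
  congr 1
  · rw [← prod_range_reflect]
    apply prod_congr rfl
    intro m hm
    simp only [mem_range] at hm
    omega
  · rw [← prod_three_mul, ← prod_range_reflect]
    apply prod_congr rfl
    intro m hm
    simp only [mem_range] at hm
    omega

lemma G2_eval (n : ℕ) :
    ∏ j ∈ range (2 * n + 2), (3 * n + 3 - sfun j) =
      (3 ^ (n + 1) * (n + 1).factorial) * ∏ m ∈ range (n + 1), (3 * m + 2) := by
  rw [even_split]
  congr 1
  · rw [← prod_three_mul, ← prod_range_reflect]
    apply prod_congr rfl
    intro m hm
    simp only [mem_range] at hm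
    omega
  · rw [← prod_range_reflect]
    apply prod_congr rfl
    intro m hm
    simp only [mem_range] at hm
    omega

lemma fact_three_split (n : ℕ) :
    (3 * n + 3).factorial =
      3 ^ (n + 1) * (n + 1).factorial * (∏ m ∈ range (n + 1), (3 * m + 1)) *
        ∏ m ∈ range (n + 1), (3 * m + 2) := by
  induction n with
  | zero => simp [Nat.factorial]
  | succ n ih =>
    have h1 : 3 * (n + 1) + 3 = (3 * n + 3) + 1 + 1 + 1 := by ring
    rw [h1, Nat.factorial_succ, Nat.factorial_succ, Nat.factorial_succ, ih,
      prod_range_succ (fun m => 3 * m + 1) (n + 1), prod_range_succ (fun m => 3 * m + 2) (n + 1),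
      pow_succ 3 (n + 1), Nat.factorial_succ (n + 1)]
    ring

lemma Dn_succ (n : ℕ) :
    Dn (n + 1) = Dn n * (∏ j ∈ range (2 * n + 1), (3 * n + 1 - sfun j)) *
      ∏ j ∈ range (2 * n + 2), (3 * n + 3 - sfun j) := by
  unfold Dn
  have h1 : 2 * (n + 1) + 1 = (2 * n + 1) + 1 + 1 := by ring
  rw [h1, prod_range_succ, prod_range_succ]
  have h2 : sfun (2 * n + 1) = 3 * n + 1 := by unfold sfun; omega
  have h3 : sfun (2 * n + 1 + 1) = 3 * n + 3 := by unfold sfun; omega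
  rw [h2, h3]

lemma pow_exp_succ (n : ℕ) : 3 ^ ((n + 1) * n / 2) = 3 ^ (n * (n - 1) / 2) * 3 ^ n := by
  rw [← pow_add]
  congr 1
  have h : (n + 1) * n = n * (n - 1) + n * 2 := by
    cases n with
    | zero => rfl
    | succ m =>
      simp only [Nat.add_sub_cancel]
      ring
  rw [h, Nat.add_mul_div_right _ _ (by norm_num : 0 < 2)]

theorem main3 (n : ℕ) :
    Dn n * ∏ i ∈ range (n + 1), (n + i).factorial =
      3 ^ (n * (n - 1) / 2) * (∏ i ∈ range (n + 1), (3 * i).factorial) *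
        ∏ t ∈ range (2 * n + 1), t.factorial := by
  induction n with
  | zero => simp [Dn]
  | succ n ih =>
    have hG : (∏ j ∈ range (2 * n + 1), (3 * n + 1 - sfun j)) *
        (∏ j ∈ range (2 * n + 2), (3 * n + 3 - sfun j)) =
        3 ^ n * n.factorial * (3 * n + 3).factorial := by
      rw [G1_eval, G2_eval, fact_three_split]
      ring
    -- shift lemma for the middle product
    have hshift : (∏ i ∈ range (n + 2), (n + 1 + i).factorial) * n.factorial =
        (∏ i ∈ range (n + 1), (n + i).factorial) * (2 * n + 1).factorial *
          (2 * n + 2).factorial := by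
      have e1 : ∏ i ∈ range (n + 3), (n + i).factorial =
          (∏ i ∈ range (n + 2), (n + (i + 1)).factorial) * (n + 0).factorial :=
        prod_range_succ' (fun i => (n + i).factorial) (n + 2)
      have e2 : ∏ i ∈ range (n + 3), (n + i).factorial =
          (∏ i ∈ range (n + 1), (n + i).factorial) * (n + (n + 1)).factorial *
            (n + (n + 2)).factorial := by
        rw [prod_range_succ, prod_range_succ]
      have e3 : ∏ i ∈ range (n + 2), (n + (i + 1)).factorial =
          ∏ i ∈ range (n + 2), (n + 1 + i).factorial :=
        prod_congr rfl (fun i _ => by congr 1; ring)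
      rw [e3] at e1
      rw [e2] at e1
      have e4 : n + (n + 1) = 2 * n + 1 := by ring
      have e5 : n + (n + 2) = 2 * n + 2 := by ring
      rw [e4, e5] at e1
      rw [e1]
      norm_num
    have hpow : 3 ^ ((n + 1) * (n + 1 - 1) / 2) = 3 ^ (n * (n - 1) / 2) * 3 ^ n := by
      have : n + 1 - 1 = n := rfl
      rw [this, pow_exp_succ]
    have hprod3 : ∏ i ∈ range (n + 2), (3 * i).factorial =
        (∏ i ∈ range (n + 1), (3 * i).factorial) * (3 * n + 3).factorial := by
      rw [prod_range_succ]
      have h9 : 3 * (n + 1) = 3 * n + 3 := by ring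
      rw [h9]
    have hprodt : ∏ t ∈ range (2 * (n + 1) + 1), t.factorial =
        (∏ t ∈ range (2 * n + 1), t.factorial) * (2 * n + 1).factorial *
          (2 * n + 2).factorial := by
      have : 2 * (n + 1) + 1 = (2 * n + 1) + 1 + 1 := by ring
      rw [this, prod_range_succ, prod_range_succ]
    -- now combine; multiply both sides by n!
    have key : Dn (n + 1) * (∏ i ∈ range (n + 2), (n + 1 + i).factorial) * n.factorial =
        (3 ^ ((n + 1) * (n + 1 - 1) / 2) * (∏ i ∈ range (n + 2), (3 * i).factorial) *
          ∏ t ∈ range (2 * (n + 1) + 1), t.factorial) * n.factorial := by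
      rw [Dn_succ]
      calc Dn n * (∏ j ∈ range (2 * n + 1), (3 * n + 1 - sfun j)) *
            (∏ j ∈ range (2 * n + 2), (3 * n + 3 - sfun j)) *
            (∏ i ∈ range (n + 2), (n + 1 + i).factorial) * n.factorial
          = Dn n * ((∏ j ∈ range (2 * n + 1), (3 * n + 1 - sfun j)) *
            (∏ j ∈ range (2 * n + 2), (3 * n + 3 - sfun j))) *
            ((∏ i ∈ range (n + 2), (n + 1 + i).factorial) * n.factorial) := by ring
        _ = Dn n * (3 ^ n * n.factorial * (3 * n + 3).factorial) *
            ((∏ i ∈ range (n + 1), (n + i).factorial) * (2 * n + 1).factorial *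
              (2 * n + 2).factorial) := by rw [hG, hshift]
        _ = (Dn n * ∏ i ∈ range (n + 1), (n + i).factorial) *
            (3 ^ n * n.factorial * (3 * n + 3).factorial * (2 * n + 1).factorial *
              (2 * n + 2).factorial) := by ring
        _ = (3 ^ (n * (n - 1) / 2) * (∏ i ∈ range (n + 1), (3 * i).factorial) *
              ∏ t ∈ range (2 * n + 1), t.factorial) *
            (3 ^ n * n.factorial * (3 * n + 3).factorial * (2 * n + 1).factorial *
              (2 * n + 2).factorial) := by rw [ih]
        _ = _ := by rw [hpow, hprod3, hprodt]; ring
    exact Nat.eq_of_mul_eq_mul_right (Nat.factorial_pos n) key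


open Finset Polynomial Matrix

/-- boxes for the Gelfand-Tsetlin recursion -/
def boxF (r : ℕ) (l : Fin (r + 1) → ℕ) : Finset (Fin r → ℕ) :=
  Fintype.piFinset fun i => Finset.Ico (l i.succ) (l i.castSucc)

/-- number of GT patterns with given strictly decreasing top row -/
def GTP : (r : ℕ) → (Fin r → ℕ) → ℕ
  | 0, _ => 1
  | r + 1, l => ∑ m ∈ boxF r l, GTP r m

/-- difference product, in decreasing orientation -/
def Dl (r : ℕ) (v : Fin r → ℚ) : ℚ := ∏ i, ∏ j ∈ Finset.Ioi i, (v i - v j)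

lemma mem_boxF {r : ℕ} {l : Fin (r + 1) → ℕ} {m : Fin r → ℕ} :
    m ∈ boxF r l ↔ ∀ i, l i.succ ≤ m i ∧ m i < l i.castSucc := by
  simp [boxF, Fintype.mem_piFinset, Finset.mem_Ico]

lemma det_vdm_eq_sign_mul (r : ℕ) (v : Fin r → ℚ) :
    (Matrix.vandermonde v).det =
      (-1 : ℚ) ^ (∑ i : Fin r, #(Finset.Ioi i)) * Dl r v := by
  rw [Matrix.det_vandermonde, Dl, ← prod_pow_eq_pow_sum, ← prod_mul_distrib]
  refine prod_congr rfl fun i _ => ?_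
  rw [← prod_const, ← prod_mul_distrib]
  exact prod_congr rfl fun j _ => by ring

lemma Dl_eq_sign_mul_det (r : ℕ) (v : Fin r → ℚ) :
    Dl r v = (-1 : ℚ) ^ (∑ i : Fin r, #(Finset.Ioi i)) * (Matrix.vandermonde v).det := by
  rw [det_vdm_eq_sign_mul, ← mul_assoc, ← pow_add, ← two_mul, pow_mul]
  norm_num

/-- (p+1) times the Faulhaber polynomial -/
noncomputable def Qm (p : ℕ) : Polynomial ℚ :=
  X ^ (p + 1) +
    ∑ i ∈ Finset.range p, C (_root_.bernoulli (i + 1) * ((p + 1).choose (i + 1))) * X ^ (p - i)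

lemma Qm_tail_degree_lt (p : ℕ) :
    (∑ i ∈ Finset.range p, C (_root_.bernoulli (i + 1) * ((p + 1).choose (i + 1))) * X ^ (p - i) :
      Polynomial ℚ).degree < (p + 1 : ℕ) := by
  refine lt_of_le_of_lt (degree_sum_le _ _) ?_
  rw [Finset.sup_lt_iff (by exact_mod_cast WithBot.bot_lt_coe (p + 1))]
  intro i _
  refine lt_of_le_of_lt (degree_C_mul_X_pow_le _ _) ?_
  exact_mod_cast Nat.lt_succ_of_le (Nat.sub_le p i)

lemma Qm_monic (p : ℕ) : (Qm p).Monic := by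
  unfold Qm
  exact monic_X_pow_add (Qm_tail_degree_lt p)

lemma Qm_degree (p : ℕ) : (Qm p).degree = (p + 1 : ℕ) := by
  unfold Qm
  rw [degree_add_eq_left_of_degree_lt
    (by rw [degree_X_pow]; exact Qm_tail_degree_lt p), degree_X_pow]

lemma Qm_natDegree (p : ℕ) : (Qm p).natDegree = p + 1 :=
  natDegree_eq_of_degree_eq_some (Qm_degree p)

lemma Qm_eval (p n : ℕ) :
    (Qm p).eval (n : ℚ) = ((p : ℚ) + 1) * ∑ k ∈ range n, (k : ℚ) ^ p := by
  rw [sum_range_pow, Finset.mul_sum]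
  have h1 : ∀ i ∈ range (p + 1),
      ((p : ℚ) + 1) * (_root_.bernoulli i * ((p + 1).choose i) * (n : ℚ) ^ (p + 1 - i) / (p + 1)) =
        _root_.bernoulli i * ((p + 1).choose i) * (n : ℚ) ^ (p + 1 - i) := by
    intro i _
    have : ((p : ℚ) + 1) ≠ 0 := by positivity
    push_cast
    field_simp
  rw [sum_congr rfl h1, Finset.sum_range_succ']
  unfold Qm
  rw [eval_add, eval_pow, eval_X, eval_finset_sum]
  simp only [eval_mul, eval_C, eval_pow, eval_X]
  rw [add_comm]
  congr 1
  · refine sum_congr rfl fun i hi => ?_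
    simp only [mem_range] at hi
    have e : p + 1 - (i + 1) = p - i := by omega
    rw [e]
  · simp [_root_.bernoulli_zero]

lemma sum_box_det (r : ℕ) (l : Fin (r + 1) → ℕ) :
    ∑ m ∈ boxF r l, (Matrix.vandermonde fun i => ((m i : ℚ))).det =
      (Matrix.of fun (i : Fin r) (j : Fin r) =>
        ∑ x ∈ Finset.Ico (l i.succ) (l i.castSucc), (x : ℚ) ^ (j : ℕ)).det := by
  classical
  have h := (Matrix.detRowAlternating (R := ℚ) (n := Fin r)).toMultilinearMap.map_sum_finset
    (fun i (x : ℕ) => fun j : Fin r => (x : ℚ) ^ (j : ℕ))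
    (fun i => Finset.Ico (l i.succ) (l i.castSucc))
  have h2 : (Matrix.of fun (i : Fin r) (j : Fin r) =>
      ∑ x ∈ Finset.Ico (l i.succ) (l i.castSucc), (x : ℚ) ^ (j : ℕ)).det =
      (Matrix.detRowAlternating (R := ℚ) (n := Fin r)).toMultilinearMap
        (fun i => ∑ x ∈ Finset.Ico (l i.succ) (l i.castSucc),
          (fun j : Fin r => (x : ℚ) ^ (j : ℕ))) := by
    congr 1
    funext i
    exact (Finset.sum_fn (Finset.Ico (l i.succ) (l i.castSucc))
      (fun x (j : Fin r) => (x : ℚ) ^ (j : ℕ))).symm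
  refine Eq.trans ?_ h2.symm
  exact h.symm

lemma Ioi_castSucc_eq (r : ℕ) (i : Fin r) :
    Finset.Ioi (i.castSucc) =
      insert (Fin.last r) ((Finset.Ioi i).map Fin.castSuccEmb) := by
  ext x
  simp only [Finset.mem_Ioi, Finset.mem_insert, Finset.mem_map, Fin.castSuccEmb_apply]
  constructor
  · intro hx
    rcases eq_or_ne x (Fin.last r) with h | h
    · exact Or.inl h
    · right
      refine ⟨x.castPred h, ?_, Fin.castSucc_castPred x h⟩
      have h1 : (i.castSucc : ℕ) < (x : ℕ) := hx
      have h2 : ((x.castPred h : Fin r) : ℕ) = (x : ℕ) := rfl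
      exact Fin.lt_def.mpr (by simpa [h2] using h1)
  · rintro (rfl | ⟨j, hj, rfl⟩)
    · exact Fin.castSucc_lt_last i
    · exact Fin.castSucc_lt_castSucc_iff.mpr hj

lemma Dl_succ (r : ℕ) (v : Fin (r + 1) → ℚ) :
    Dl (r + 1) v = (∏ i : Fin r, (v i.castSucc - v (Fin.last r))) *
      Dl r (fun i => v i.castSucc) := by
  unfold Dl
  rw [Fin.prod_univ_castSucc]
  have hlast : Finset.Ioi (Fin.last r) = (∅ : Finset (Fin (r + 1))) := by
    ext j
    simp only [Finset.mem_Ioi, Finset.notMem_empty, iff_false]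
    exact not_lt.mpr (Fin.le_last j)
  rw [hlast, Finset.prod_empty, mul_one, ← Finset.prod_mul_distrib]
  refine Finset.prod_congr rfl fun i _ => ?_
  rw [Ioi_castSucc_eq, Finset.prod_insert, Finset.prod_map]
  · have hb : ∀ x ∈ Finset.Ioi i, v i.castSucc - v (Fin.castSuccEmb x) =
        (fun t : Fin r => v t.castSucc) i - (fun t : Fin r => v t.castSucc) x := fun x _ => rfl
    rw [Finset.prod_congr rfl hb, mul_comm]
  · simp only [Finset.mem_map, Fin.castSuccEmb_apply]
    rintro ⟨j, _, hj⟩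
    exact (Fin.castSucc_lt_last j).ne hj

/-- the difference matrix -/
def Lmat (r : ℕ) : Matrix (Fin r) (Fin r) ℚ :=
  Matrix.of fun i i' =>
    (if i' = i then (1 : ℚ) else 0) + (if (i' : ℕ) = (i : ℕ) + 1 then -1 else 0)

lemma Lmat_triangular (r : ℕ) : (Lmat r).BlockTriangular id := by
  intro i i' h
  have h' : (i' : ℕ) < (i : ℕ) := h
  simp only [Lmat, Matrix.of_apply]
  rw [if_neg (by omega : ¬ (i' : ℕ) = (i : ℕ) + 1),
    if_neg (fun hc => by simp [hc] at h')]
  ring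

lemma Lmat_det (r : ℕ) : (Lmat r).det = 1 := by
  rw [Matrix.det_of_upperTriangular (Lmat_triangular r)]
  have : ∀ i : Fin r, Lmat r i i = 1 := by
    intro i
    simp only [Lmat, Matrix.of_apply, if_true]
    rw [if_neg (by omega : ¬ (i : ℕ) = (i : ℕ) + 1)]
    ring
  simp [this]

lemma Lmat_mul_apply (r : ℕ) (B : Matrix (Fin r) (Fin r) ℚ) (i j : Fin r) :
    (Lmat r * B) i j = B i j - (if h : (i : ℕ) + 1 < r then B ⟨(i : ℕ) + 1, h⟩ j else 0) := by
  classical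
  rw [Matrix.mul_apply]
  have expand : ∀ i' : Fin r, Lmat r i i' * B i' j =
      (if i' = i then B i' j else 0) + (if (i' : ℕ) = (i : ℕ) + 1 then -B i' j else 0) := by
    intro i'
    simp only [Lmat, Matrix.of_apply, add_mul, ite_mul, one_mul, zero_mul, neg_one_mul]
  have hS : (∑ i' : Fin r, if (i' : ℕ) = (i : ℕ) + 1 then -B i' j else 0) =
      -(if h : (i : ℕ) + 1 < r then B ⟨(i : ℕ) + 1, h⟩ j else 0) := by
    by_cases h : (i : ℕ) + 1 < r
    · rw [dif_pos h]
      have hrw : ∀ i' : Fin r, i' ∈ Finset.univ →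
          (if (i' : ℕ) = (i : ℕ) + 1 then -B i' j else 0) =
            (if i' = (⟨(i : ℕ) + 1, h⟩ : Fin r) then -B i' j else 0) := by
        intro i' _
        exact if_congr (by simp [Fin.ext_iff]) rfl rfl
      rw [Finset.sum_congr rfl hrw, Finset.sum_ite_eq' Finset.univ _ (fun i' => -B i' j)]
      simp
    · rw [dif_neg h, Finset.sum_eq_zero, neg_zero]
      intro i' _
      rw [if_neg]
      intro hc
      exact h (hc ▸ i'.isLt)
  rw [Finset.sum_congr rfl (fun i' _ => expand i'), Finset.sum_add_distrib,
    Finset.sum_ite_eq' Finset.univ i (fun i' => B i' j), hS]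
  simp only [Finset.mem_univ, if_true]
  ring

lemma key_det (r : ℕ) (l : Fin (r + 1) → ℕ)
    (hl : ∀ i j : Fin (r + 1), i < j → l j < l i) :
    (r.factorial : ℚ) * ∑ m ∈ boxF r l, Dl r (fun i => (m i : ℚ)) =
      Dl (r + 1) (fun i => (l i : ℚ)) := by
  classical
  have hmono : ∀ i : Fin r, l i.succ ≤ l i.castSucc := fun i =>
    le_of_lt (hl i.castSucc i.succ (Fin.castSucc_lt_succ (i := i)))
  have hE2 : ∀ x : ℚ, ((-1 : ℚ) ^ (∑ i : Fin r, #(Finset.Ioi i))) *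
      ((-1 : ℚ) ^ (∑ i : Fin r, #(Finset.Ioi i))) = 1 := by
    intro x
    rw [← pow_add, ← two_mul, pow_mul]
    norm_num
  -- step 1
  have step1 : ∑ m ∈ boxF r l, Dl r (fun i => (m i : ℚ)) =
      (-1 : ℚ) ^ (∑ i : Fin r, #(Finset.Ioi i)) *
        (Matrix.of fun (i : Fin r) (j : Fin r) =>
          ∑ x ∈ Finset.Ico (l i.succ) (l i.castSucc), (x : ℚ) ^ (j : ℕ)).det := by
    rw [← sum_box_det r l, Finset.mul_sum]
    exact Finset.sum_congr rfl fun m _ => Dl_eq_sign_mul_det r _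
  -- step 2
  have hR2R : (Matrix.of fun (i : Fin r) (j : Fin r) =>
      (Qm (j : ℕ)).eval ((l i.castSucc : ℚ)) - (Qm (j : ℕ)).eval ((l i.succ : ℚ))) =
      Matrix.of (fun (i : Fin r) (j : Fin r) => ((j : ℚ) + 1) *
        (Matrix.of fun (i2 : Fin r) (j2 : Fin r) =>
          ∑ x ∈ Finset.Ico (l i2.succ) (l i2.castSucc), (x : ℚ) ^ (j2 : ℕ)) i j) := by
    ext i j
    simp only [Matrix.of_apply]
    rw [Qm_eval, Qm_eval, Finset.sum_Ico_eq_sub _ (hmono i)]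
    push_cast
    ring
  have step2 : (Matrix.of fun (i : Fin r) (j : Fin r) =>
      (Qm (j : ℕ)).eval ((l i.castSucc : ℚ)) - (Qm (j : ℕ)).eval ((l i.succ : ℚ))).det =
      (r.factorial : ℚ) * (Matrix.of fun (i : Fin r) (j : Fin r) =>
        ∑ x ∈ Finset.Ico (l i.succ) (l i.castSucc), (x : ℚ) ^ (j : ℕ)).det := by
    rw [hR2R, Matrix.det_mul_row]
    congr 1
    have hj : ∀ j : Fin r, ((j : ℚ) + 1) = (((j : ℕ) + 1 : ℕ) : ℚ) := by
      intro j; push_cast; ring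
    rw [Finset.prod_congr rfl (fun j _ => hj j), ← Nat.cast_prod,
      Fin.prod_univ_eq_prod_range (fun j => j + 1) r, prod_range_add_one_eq_factorial]
  -- step 3
  have step3 : (Matrix.of fun (i : Fin r) (j : Fin r) =>
      (Qm (j : ℕ)).eval ((l i.castSucc : ℚ)) - (Qm (j : ℕ)).eval ((l i.succ : ℚ))) =
      Lmat r * (Matrix.of fun (i : Fin r) (j : Fin r) =>
        (Qm (j : ℕ)).eval ((l i.castSucc : ℚ)) - (Qm (j : ℕ)).eval ((l (Fin.last r) : ℚ))) := by
    ext i j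
    rw [Lmat_mul_apply]
    simp only [Matrix.of_apply]
    by_cases h : (i : ℕ) + 1 < r
    · rw [dif_pos h]
      have hcast : ((⟨(i : ℕ) + 1, h⟩ : Fin r)).castSucc = i.succ := rfl
      rw [hcast]
      ring
    · rw [dif_neg h]
      have hlast : i.succ = Fin.last r := by
        have hi := i.isLt
        ext
        simp only [Fin.val_succ, Fin.val_last]
        omega
      rw [hlast]
      ring
  -- step 4: factor out roots
  have hfac : ∀ j : Fin r, (X - C ((l (Fin.last r) : ℚ))) *
      ((Qm (j : ℕ) - C ((Qm (j : ℕ)).eval ((l (Fin.last r) : ℚ)))) /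
        (X - C ((l (Fin.last r) : ℚ)))) =
      Qm (j : ℕ) - C ((Qm (j : ℕ)).eval ((l (Fin.last r) : ℚ))) := by
    intro j
    apply mul_div_eq_iff_isRoot.mpr
    simp [IsRoot.def]
  have hSmonic : ∀ j : Fin r,
      (Qm (j : ℕ) - C ((Qm (j : ℕ)).eval ((l (Fin.last r) : ℚ)))).Monic := by
    intro j
    rw [sub_eq_add_neg]
    refine (Qm_monic (j : ℕ)).add_of_left ?_
    rw [Qm_degree]
    refine lt_of_le_of_lt ?_ (by exact_mod_cast Nat.succ_pos (j : ℕ) :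
      (0 : WithBot ℕ) < (((j : ℕ) + 1 : ℕ) : WithBot ℕ))
    rw [degree_neg]
    exact degree_C_le
  have hSdeg : ∀ j : Fin r,
      (Qm (j : ℕ) - C ((Qm (j : ℕ)).eval ((l (Fin.last r) : ℚ)))).natDegree = (j : ℕ) + 1 := by
    intro j
    apply natDegree_eq_of_degree_eq_some
    rw [sub_eq_add_neg, degree_add_eq_left_of_degree_lt, Qm_degree]
    rw [Qm_degree]
    refine lt_of_le_of_lt ?_ (by exact_mod_cast Nat.succ_pos (j : ℕ) :
      (0 : WithBot ℕ) < (((j : ℕ) + 1 : ℕ) : WithBot ℕ))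
    rw [degree_neg]
    exact degree_C_le
  have hHmonic : ∀ j : Fin r, ((Qm (j : ℕ) - C ((Qm (j : ℕ)).eval ((l (Fin.last r) : ℚ)))) /
      (X - C ((l (Fin.last r) : ℚ)))).Monic := by
    intro j
    exact (monic_X_sub_C _).of_mul_monic_left (by rw [hfac j]; exact hSmonic j)
  have hHdeg : ∀ j : Fin r, ((Qm (j : ℕ) - C ((Qm (j : ℕ)).eval ((l (Fin.last r) : ℚ)))) /
      (X - C ((l (Fin.last r) : ℚ)))).natDegree = (j : ℕ) := by
    intro j
    have hmul := (monic_X_sub_C ((l (Fin.last r) : ℚ))).natDegree_mul (hHmonic j)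
    rw [hfac j, hSdeg j, natDegree_X_sub_C] at hmul
    omega
  have hBfac : (Matrix.of fun (i : Fin r) (j : Fin r) =>
      (Qm (j : ℕ)).eval ((l i.castSucc : ℚ)) - (Qm (j : ℕ)).eval ((l (Fin.last r) : ℚ))) =
      Matrix.of (fun (i : Fin r) (j : Fin r) => ((l i.castSucc : ℚ) - (l (Fin.last r) : ℚ)) *
        ((Qm (j : ℕ) - C ((Qm (j : ℕ)).eval ((l (Fin.last r) : ℚ)))) /
          (X - C ((l (Fin.last r) : ℚ)))).eval ((l i.castSucc : ℚ))) := by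
    ext i j
    simp only [Matrix.of_apply]
    calc (Qm (j : ℕ)).eval ((l i.castSucc : ℚ)) - (Qm (j : ℕ)).eval ((l (Fin.last r) : ℚ))
        = (Qm (j : ℕ) - C ((Qm (j : ℕ)).eval ((l (Fin.last r) : ℚ)))).eval
            ((l i.castSucc : ℚ)) := by simp
      _ = ((X - C ((l (Fin.last r) : ℚ))) *
            ((Qm (j : ℕ) - C ((Qm (j : ℕ)).eval ((l (Fin.last r) : ℚ)))) /
              (X - C ((l (Fin.last r) : ℚ))))).eval ((l i.castSucc : ℚ)) := by rw [hfac j]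
      _ = _ := by simp
  have step4 : (Matrix.of fun (i : Fin r) (j : Fin r) =>
      (Qm (j : ℕ)).eval ((l i.castSucc : ℚ)) - (Qm (j : ℕ)).eval ((l (Fin.last r) : ℚ))).det =
      (∏ i : Fin r, ((l i.castSucc : ℚ) - (l (Fin.last r) : ℚ))) *
        (Matrix.of (fun (i : Fin r) (j : Fin r) =>
          ((Qm (j : ℕ) - C ((Qm (j : ℕ)).eval ((l (Fin.last r) : ℚ)))) /
            (X - C ((l (Fin.last r) : ℚ)))).eval ((l i.castSucc : ℚ)))).det := by
    rw [hBfac]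
    exact Matrix.det_mul_column _ _
  have step5 : (Matrix.of (fun (i : Fin r) (j : Fin r) =>
      ((Qm (j : ℕ) - C ((Qm (j : ℕ)).eval ((l (Fin.last r) : ℚ)))) /
        (X - C ((l (Fin.last r) : ℚ)))).eval ((l i.castSucc : ℚ)))).det =
      (Matrix.vandermonde (fun i : Fin r => (l i.castSucc : ℚ))).det :=
    (Matrix.det_eval_matrixOfPolynomials_eq_det_vandermonde
      (fun i : Fin r => (l i.castSucc : ℚ)) _ hHdeg hHmonic).symm
  have vdm2 : (Matrix.vandermonde (fun i : Fin r => (l i.castSucc : ℚ))).det =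
      (-1 : ℚ) ^ (∑ i : Fin r, #(Finset.Ioi i)) * Dl r (fun i => (l i.castSucc : ℚ)) :=
    det_vdm_eq_sign_mul r _
  calc (r.factorial : ℚ) * ∑ m ∈ boxF r l, Dl r (fun i => (m i : ℚ))
      = (-1 : ℚ) ^ (∑ i : Fin r, #(Finset.Ioi i)) * ((r.factorial : ℚ) *
          (Matrix.of fun (i : Fin r) (j : Fin r) =>
            ∑ x ∈ Finset.Ico (l i.succ) (l i.castSucc), (x : ℚ) ^ (j : ℕ)).det) := by
        rw [step1]; ring
    _ = (-1 : ℚ) ^ (∑ i : Fin r, #(Finset.Ioi i)) *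
          (Matrix.of fun (i : Fin r) (j : Fin r) =>
            (Qm (j : ℕ)).eval ((l i.castSucc : ℚ)) -
              (Qm (j : ℕ)).eval ((l i.succ : ℚ))).det := by rw [step2]
    _ = (-1 : ℚ) ^ (∑ i : Fin r, #(Finset.Ioi i)) *
          (Matrix.of fun (i : Fin r) (j : Fin r) =>
            (Qm (j : ℕ)).eval ((l i.castSucc : ℚ)) -
              (Qm (j : ℕ)).eval ((l (Fin.last r) : ℚ))).det := by
        rw [step3, Matrix.det_mul, Lmat_det, one_mul]
    _ = (-1 : ℚ) ^ (∑ i : Fin r, #(Finset.Ioi i)) *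
          ((∏ i : Fin r, ((l i.castSucc : ℚ) - (l (Fin.last r) : ℚ))) *
            ((-1 : ℚ) ^ (∑ i : Fin r, #(Finset.Ioi i)) *
              Dl r (fun i => (l i.castSucc : ℚ)))) := by
        rw [step4, step5, vdm2]
    _ = ((-1 : ℚ) ^ (∑ i : Fin r, #(Finset.Ioi i)) *
          (-1 : ℚ) ^ (∑ i : Fin r, #(Finset.Ioi i))) *
          ((∏ i : Fin r, ((l i.castSucc : ℚ) - (l (Fin.last r) : ℚ))) *
            Dl r (fun i => (l i.castSucc : ℚ))) := by ring
    _ = (∏ i : Fin r, ((l i.castSucc : ℚ) - (l (Fin.last r) : ℚ))) *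
          Dl r (fun i => (l i.castSucc : ℚ)) := by rw [hE2 0, one_mul]
    _ = Dl (r + 1) (fun i => (l i : ℚ)) := (Dl_succ r (fun i => (l i : ℚ))).symm

lemma GTP_formula (r : ℕ) : ∀ (l : Fin r → ℕ), (∀ i j : Fin r, i < j → l j < l i) →
    ((∏ t ∈ range r, t.factorial : ℕ) : ℚ) * GTP r l = Dl r (fun i => (l i : ℚ)) := by
  induction r with
  | zero =>
    intro l _
    simp [GTP, Dl]
  | succ r ih =>
    intro l hl
    have hbox : ∀ m ∈ boxF r l, (∀ i j : Fin r, i < j → m j < m i) := by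
      intro m hm i j hij
      have h1 := (mem_boxF.mp hm) i
      have h2 := (mem_boxF.mp hm) j
      have hle : l j.castSucc ≤ l i.succ := by
        have hij' : i.succ ≤ j.castSucc := by
          rw [Fin.le_def]
          simp only [Fin.val_succ, Fin.coe_castSucc]
          exact Fin.lt_def.mp hij
        rcases eq_or_lt_of_le hij' with h | h
        · rw [h]
        · exact le_of_lt (hl _ _ h)
      omega
    have hGTP : GTP (r + 1) l = ∑ m ∈ boxF r l, GTP r m := rfl
    rw [hGTP, prod_range_succ, Nat.cast_mul, Nat.cast_sum]
    calc ((∏ t ∈ range r, t.factorial : ℕ) : ℚ) * (r.factorial : ℚ) *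
          (∑ m ∈ boxF r l, (GTP r m : ℚ))
        = (r.factorial : ℚ) * ∑ m ∈ boxF r l,
            ((∏ t ∈ range r, t.factorial : ℕ) : ℚ) * (GTP r m : ℚ) := by
          rw [Finset.mul_sum, Finset.mul_sum]
          exact Finset.sum_congr rfl fun m _ => by ring
      _ = (r.factorial : ℚ) * ∑ m ∈ boxF r l, Dl r (fun i => (m i : ℚ)) := by
          congr 1
          exact Finset.sum_congr rfl fun m hm => ih m (hbox m hm)
      _ = Dl (r + 1) (fun i => (l i : ℚ)) := key_det r l hl


open Finset

lemma YD_ext {μ ν : YoungDiagram} (h : ∀ i j : ℕ, (i, j) ∈ μ ↔ (i, j) ∈ ν) : μ = ν := by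
  cases μ with
  | mk c1 h1 =>
    cases ν with
    | mk c2 h2 =>
      congr 1
      ext p
      have := h p.1 p.2
      simpa using this

lemma rowLen_eq_of_iff {μ : YoungDiagram} {i t : ℕ} (h : ∀ j, (i, j) ∈ μ ↔ j < t) :
    μ.rowLen i = t := by
  rcases lt_trichotomy (μ.rowLen i) t with hlt | he | hgt
  · have h2 := YoungDiagram.mem_iff_lt_rowLen.mp ((h (μ.rowLen i)).mpr hlt)
    omega
  · exact he
  · have h2 := (h t).mp (YoungDiagram.mem_iff_lt_rowLen.mpr hgt)
    omega

lemma rowLen_le_rowLen {ν μ : YoungDiagram} (h : ∀ i j : ℕ, (i, j) ∈ ν → (i, j) ∈ μ) (i : ℕ) :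
    ν.rowLen i ≤ μ.rowLen i := by
  by_contra hc
  push_neg at hc
  have h1 : (i, μ.rowLen i) ∈ ν := YoungDiagram.mem_iff_lt_rowLen.mpr hc
  have h2 := YoungDiagram.mem_iff_lt_rowLen.mp (h _ _ h1)
  omega

lemma rowLen_eq_zero_of_colLen {μ : YoungDiagram} {c : ℕ} (h : μ.colLen 0 ≤ c) {i : ℕ}
    (hi : c ≤ i) : μ.rowLen i = 0 := by
  by_contra hc
  have h1 : (i, 0) ∈ μ := YoungDiagram.mem_iff_lt_rowLen.mpr (by omega)
  have h2 := YoungDiagram.mem_iff_lt_colLen.mp h1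
  omega

lemma colLen_le_iff {μ : YoungDiagram} {c : ℕ} : μ.colLen 0 ≤ c ↔ (c, 0) ∉ μ := by
  rw [YoungDiagram.mem_iff_lt_colLen]
  omega

lemma entry_lt {μ : YoungDiagram} {T : SemistandardYoungTableau μ} {k : ℕ}
    (hT : T ∈ ssytSet μ k) : ∀ i j, (i, j) ∈ μ → i < T i j := by
  intro i
  induction i with
  | zero =>
    intro j hj
    exact (hT 0 j hj).1
  | succ i ih =>
    intro j hj
    have hj' : (i, j) ∈ μ := μ.up_left_mem (Nat.le_succ i) le_rfl hj
    have h1 := T.col_strict (Nat.lt_succ_self i) hj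
    have h2 := ih j hj'
    simp only [Nat.succ_eq_add_one] at *
    omega

/-- Young diagram from a weakly decreasing row-length function vanishing at `B`. -/
def subShape (g : ℕ → ℕ) (B : ℕ) (hg : ∀ i, g (i + 1) ≤ g i) (hB : g B = 0) : YoungDiagram where
  cells := (Finset.range B ×ˢ Finset.range (g 0 + 1)).filter fun p => p.2 < g p.1
  isLowerSet := by
    have hanti : ∀ i1 i2 : ℕ, i1 ≤ i2 → g i2 ≤ g i1 := fun i1 i2 h =>
      antitone_nat_of_succ_le hg h
    intro a b hba ha
    have h1 : b.1 ≤ a.1 := (Prod.le_def.mp hba).1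
    have h2 : b.2 ≤ a.2 := (Prod.le_def.mp hba).2
    simp only [Finset.mem_coe, Finset.mem_filter, Finset.mem_product, Finset.mem_range] at ha ⊢
    have h3 := hanti _ _ h1
    have h4 := hanti 0 b.1 (Nat.zero_le _)
    omega

lemma mem_subShape {g : ℕ → ℕ} {B : ℕ} {hg : ∀ i, g (i + 1) ≤ g i} {hB : g B = 0} {i j : ℕ} :
    (i, j) ∈ subShape g B hg hB ↔ j < g i := by
  have hanti : ∀ i1 i2 : ℕ, i1 ≤ i2 → g i2 ≤ g i1 := fun i1 i2 h =>
    antitone_nat_of_succ_le hg h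
  constructor
  · intro h
    have := (Finset.mem_filter.mp h).2
    simpa using this
  · intro h
    refine Finset.mem_filter.mpr ⟨?_, h⟩
    simp only [Finset.mem_product, Finset.mem_range]
    constructor
    · by_contra hc
      push_neg at hc
      have := hanti B i hc
      omega
    · have := hanti 0 i (Nat.zero_le _)
      omega

lemma rowLen_subShape {g : ℕ → ℕ} {B : ℕ} {hg : ∀ i, g (i + 1) ≤ g i} {hB : g B = 0} (i : ℕ) :
    (subShape g B hg hB).rowLen i = g i :=
  rowLen_eq_of_iff fun _ => mem_subShape

lemma ssytSet_finite (μ : YoungDiagram) (K : ℕ) : (ssytSet μ K).Finite := by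
  classical
  have hinj : Set.InjOn
      (fun (T : SemistandardYoungTableau μ) (c : μ.cells) =>
        (⟨min (T c.1.1 c.1.2) K, by omega⟩ : Fin (K + 1)))
      (ssytSet μ K) := by
    intro T1 h1 T2 h2 heq
    ext i j
    by_cases hc : (i, j) ∈ μ
    · have := congrFun heq ⟨(i, j), (YoungDiagram.mem_cells _).mpr hc⟩
      simp only [Fin.mk.injEq] at this
      have b1 := (h1 i j hc).2
      have b2 := (h2 i j hc).2
      simp only [min_eq_left b1, min_eq_left b2] at this
      exact this
    · rw [T1.zeros hc, T2.zeros hc]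
  exact Set.Finite.of_finite_image (Set.toFinite _) hinj

lemma ncard_biUnion {α β : Type*} (s : Finset β) (F : β → Set α)
    (hfin : ∀ b ∈ s, (F b).Finite)
    (hdisj : ∀ b1 ∈ s, ∀ b2 ∈ s, b1 ≠ b2 → Disjoint (F b1) (F b2)) :
    (⋃ b ∈ s, F b).ncard = ∑ b ∈ s, (F b).ncard := by
  classical
  induction s using Finset.induction with
  | empty => simp
  | insert a s hnotmem ih =>
    rw [Finset.sum_insert hnotmem]
    have hun : (⋃ b ∈ insert a s, F b) = F a ∪ ⋃ b ∈ s, F b := by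
      simp [Set.biUnion_insert]
    rw [hun]
    have hfa : (F a).Finite := hfin a (Finset.mem_insert_self a s)
    have hfs : (⋃ b ∈ s, F b).Finite :=
      Set.Finite.biUnion s.finite_toSet fun b hb => hfin b (Finset.mem_insert_of_mem hb)
    have hd : Disjoint (F a) (⋃ b ∈ s, F b) := by
      rw [Set.disjoint_iUnion_right]
      intro b
      rw [Set.disjoint_iUnion_right]
      intro hb
      exact hdisj a (Finset.mem_insert_self a s) b (Finset.mem_insert_of_mem hb)
        (fun h => hnotmem (h ▸ hb))
    rw [Set.ncard_union_eq hd hfa hfs]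
    congr 1
    exact ih (fun b hb => hfin b (Finset.mem_insert_of_mem hb))
      (fun b1 h1 b2 h2 hne => hdisj b1 (Finset.mem_insert_of_mem h1) b2
        (Finset.mem_insert_of_mem h2) hne)



def Ltup (K : ℕ) (μ : YoungDiagram) : Fin K → ℕ := fun i => μ.rowLen i + (K - 1 - (i : ℕ))

lemma box_bounds {k : ℕ} {μ : YoungDiagram} {m : Fin k → ℕ}
    (hm : m ∈ boxF k (Ltup (k + 1) μ)) (i : Fin k) :
    μ.rowLen ((i : ℕ) + 1) + (k - 1 - (i : ℕ)) ≤ m i ∧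
      m i < μ.rowLen (i : ℕ) + (k - (i : ℕ)) := by
  have h := mem_boxF.mp hm i
  unfold Ltup at h
  simp only [Fin.val_succ, Fin.coe_castSucc] at h
  have hik := i.isLt
  omega

def gfun (k : ℕ) (m : Fin k → ℕ) : ℕ → ℕ :=
  fun i => if h : i < k then m ⟨i, h⟩ - (k - 1 - i) else 0

lemma gfun_succ_le {k : ℕ} {μ : YoungDiagram} {m : Fin k → ℕ}
    (hm : m ∈ boxF k (Ltup (k + 1) μ)) : ∀ i, gfun k m (i + 1) ≤ gfun k m i := by
  intro i
  by_cases h1 : i + 1 < k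
  · have h2 : i < k := by omega
    have b1 := box_bounds hm ⟨i + 1, h1⟩
    have b2 := box_bounds hm ⟨i, h2⟩
    simp only at b1 b2
    simp only [gfun, dif_pos h1, dif_pos h2]
    omega
  · simp only [gfun, dif_neg h1]
    omega

lemma gfun_top {k : ℕ} (m : Fin k → ℕ) : gfun k m k = 0 := by
  simp [gfun]

def nuD (k : ℕ) (μ : YoungDiagram) (m : Fin k → ℕ) (hm : m ∈ boxF k (Ltup (k + 1) μ)) :
    YoungDiagram :=
  subShape (gfun k m) k (gfun_succ_le hm) (gfun_top m)

lemma mem_nuD {k : ℕ} {μ : YoungDiagram} {m : Fin k → ℕ} {hm : m ∈ boxF k (Ltup (k + 1) μ)}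
    {i j : ℕ} : (i, j) ∈ nuD k μ m hm ↔ j < gfun k m i := mem_subShape

lemma rowLen_nuD {k : ℕ} {μ : YoungDiagram} {m : Fin k → ℕ}
    {hm : m ∈ boxF k (Ltup (k + 1) μ)} (i : ℕ) :
    (nuD k μ m hm).rowLen i = gfun k m i := rowLen_subShape i

lemma nuD_le {k : ℕ} {μ : YoungDiagram} {m : Fin k → ℕ} (hm : m ∈ boxF k (Ltup (k + 1) μ)) :
    ∀ i j, (i, j) ∈ nuD k μ m hm → (i, j) ∈ μ := by
  intro i j hij
  rw [mem_nuD] at hij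
  by_cases h : i < k
  · rw [gfun, dif_pos h] at hij
    have b := box_bounds hm ⟨i, h⟩
    simp only at b
    rw [YoungDiagram.mem_iff_lt_rowLen]
    omega
  · rw [gfun, dif_neg h] at hij
    omega

lemma nuD_strip {k : ℕ} {μ : YoungDiagram} (hμ : μ.colLen 0 ≤ k + 1) {m : Fin k → ℕ}
    (hm : m ∈ boxF k (Ltup (k + 1) μ)) :
    ∀ i j, (i + 1, j) ∈ μ → (i, j) ∈ nuD k μ m hm := by
  intro i j hij
  rw [YoungDiagram.mem_iff_lt_rowLen] at hij
  by_cases h : i < k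
  · have b := box_bounds hm ⟨i, h⟩
    simp only at b
    rw [mem_nuD, gfun, dif_pos h]
    omega
  · have : μ.rowLen (i + 1) = 0 := rowLen_eq_zero_of_colLen hμ (by omega)
    omega

lemma colLen_nuD {k : ℕ} {μ : YoungDiagram} {m : Fin k → ℕ}
    (hm : m ∈ boxF k (Ltup (k + 1) μ)) : (nuD k μ m hm).colLen 0 ≤ k := by
  rw [colLen_le_iff, mem_nuD, gfun_top]
  omega

lemma Ltup_nuD {k : ℕ} {μ : YoungDiagram} {m : Fin k → ℕ}
    (hm : m ∈ boxF k (Ltup (k + 1) μ)) : Ltup k (nuD k μ m hm) = m := by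
  funext i
  have b := box_bounds hm i
  unfold Ltup
  rw [rowLen_nuD]
  rw [gfun, dif_pos i.isLt]
  have : (⟨(i : ℕ), i.isLt⟩ : Fin k) = i := by ext; rfl
  rw [this]
  omega

def nuT (k : ℕ) (μ : YoungDiagram) (T : SemistandardYoungTableau μ) : YoungDiagram where
  cells := μ.cells.filter fun c => T c.1 c.2 ≤ k
  isLowerSet := by
    intro a b hba ha
    simp only [Finset.mem_coe, Finset.mem_filter, YoungDiagram.mem_cells] at ha ⊢
    obtain ⟨ham, hak⟩ := ha
    have h1 : b.1 ≤ a.1 := (Prod.le_def.mp hba).1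
    have h2 : b.2 ≤ a.2 := (Prod.le_def.mp hba).2
    have ham' : (a.1, a.2) ∈ μ := by simpa using ham
    have hbm : (b.1, b.2) ∈ μ := μ.up_left_mem h1 h2 ham'
    refine ⟨by simpa using hbm, ?_⟩
    calc T b.1 b.2 ≤ T b.1 a.2 := T.row_weak_of_le h2 (μ.up_left_mem h1 le_rfl ham')
      _ ≤ T a.1 a.2 := T.col_weak h1 ham'
      _ ≤ k := hak

lemma mem_nuT {k : ℕ} {μ : YoungDiagram} {T : SemistandardYoungTableau μ} {i j : ℕ} :
    (i, j) ∈ nuT k μ T ↔ (i, j) ∈ μ ∧ T i j ≤ k := by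
  change (i, j) ∈ μ.cells.filter (fun c => T c.1 c.2 ≤ k) ↔ _
  simp [Finset.mem_filter, YoungDiagram.mem_cells]

lemma nuT_rowLen_zero {k : ℕ} {μ : YoungDiagram} {T : SemistandardYoungTableau μ}
    (hT : T ∈ ssytSet μ (k + 1)) {i : ℕ} (hi : k ≤ i) : (nuT k μ T).rowLen i = 0 := by
  by_contra hc
  have h1 : (i, 0) ∈ nuT k μ T := YoungDiagram.mem_iff_lt_rowLen.mpr (by omega)
  obtain ⟨h2, h3⟩ := mem_nuT.mp h1
  have := entry_lt hT i 0 h2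
  omega

lemma nuT_rowLen_lower {k : ℕ} {μ : YoungDiagram} {T : SemistandardYoungTableau μ}
    (hT : T ∈ ssytSet μ (k + 1)) (i : ℕ) : μ.rowLen (i + 1) ≤ (nuT k μ T).rowLen i := by
  by_contra hc
  push_neg at hc
  set j := (nuT k μ T).rowLen i with hj
  have h1 : (i + 1, j) ∈ μ := YoungDiagram.mem_iff_lt_rowLen.mpr hc
  have h2 : (i, j) ∈ μ := μ.up_left_mem (Nat.le_succ i) le_rfl h1
  have h3 := T.col_strict (Nat.lt_succ_self i) h1
  have h4 := (hT _ _ h1).2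
  simp only [Nat.succ_eq_add_one] at h3
  have h5 : (i, j) ∈ nuT k μ T := mem_nuT.mpr ⟨h2, by omega⟩
  have h6 := YoungDiagram.mem_iff_lt_rowLen.mp h5
  omega

lemma nuT_rowLen_upper {k : ℕ} {μ : YoungDiagram} {T : SemistandardYoungTableau μ} (i : ℕ) :
    (nuT k μ T).rowLen i ≤ μ.rowLen i :=
  rowLen_le_rowLen (fun _ _ h => (mem_nuT.mp h).1) i

def mOf (k : ℕ) (μ : YoungDiagram) (T : SemistandardYoungTableau μ) : Fin k → ℕ :=
  fun i => (nuT k μ T).rowLen i + (k - 1 - (i : ℕ))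

lemma mOf_mem {k : ℕ} {μ : YoungDiagram} {T : SemistandardYoungTableau μ}
    (hT : T ∈ ssytSet μ (k + 1)) : mOf k μ T ∈ boxF k (Ltup (k + 1) μ) := by
  rw [mem_boxF]
  intro i
  have hik := i.isLt
  have h1 := nuT_rowLen_lower hT (i : ℕ)
  have h2 := nuT_rowLen_upper (k := k) (T := T) (i : ℕ)
  unfold Ltup mOf
  simp only [Fin.val_succ, Fin.coe_castSucc]
  omega

lemma nuD_mOf {k : ℕ} {μ : YoungDiagram} {T : SemistandardYoungTableau μ}
    (hT : T ∈ ssytSet μ (k + 1)) : nuD k μ (mOf k μ T) (mOf_mem hT) = nuT k μ T := by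
  apply YD_ext
  intro i j
  rw [mem_nuD, YoungDiagram.mem_iff_lt_rowLen (μ := nuT k μ T)]
  by_cases h : i < k
  · rw [gfun, dif_pos h]
    have : mOf k μ T ⟨i, h⟩ = (nuT k μ T).rowLen i + (k - 1 - i) := rfl
    rw [this]
    omega
  · rw [gfun, dif_neg h, nuT_rowLen_zero hT (by omega)]

lemma mem_nuD_mOf {k : ℕ} {μ : YoungDiagram} {T : SemistandardYoungTableau μ}
    (hT : T ∈ ssytSet μ (k + 1)) (i j : ℕ) :
    (i, j) ∈ nuD k μ (mOf k μ T) (mOf_mem hT) ↔ ((i, j) ∈ μ ∧ T i j ≤ k) := by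
  rw [nuD_mOf hT]
  exact mem_nuT

def restrD {k : ℕ} {μ : YoungDiagram} (T : SemistandardYoungTableau μ)
    (hT : T ∈ ssytSet μ (k + 1)) :
    SemistandardYoungTableau (nuD k μ (mOf k μ T) (mOf_mem hT)) where
  entry i j := if (i, j) ∈ nuD k μ (mOf k μ T) (mOf_mem hT) then T i j else 0
  row_weak' {i j1 j2} hj hcell := by
    rw [if_pos hcell,
      if_pos ((nuD k μ (mOf k μ T) (mOf_mem hT)).up_left_mem le_rfl (le_of_lt hj) hcell)]
    exact T.row_weak hj ((mem_nuD_mOf hT i j2).mp hcell).1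
  col_strict' {i1 i2 j} hi hcell := by
    rw [if_pos hcell,
      if_pos ((nuD k μ (mOf k μ T) (mOf_mem hT)).up_left_mem (le_of_lt hi) le_rfl hcell)]
    exact T.col_strict hi ((mem_nuD_mOf hT i2 j).mp hcell).1
  zeros' {i j} h := if_neg h

lemma restrD_mem {k : ℕ} {μ : YoungDiagram} (T : SemistandardYoungTableau μ)
    (hT : T ∈ ssytSet μ (k + 1)) :
    restrD T hT ∈ ssytSet (nuD k μ (mOf k μ T) (mOf_mem hT)) k := by
  intro i j hij
  obtain ⟨h1, h2⟩ := (mem_nuD_mOf hT i j).mp hij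
  have : restrD T hT i j = T i j := if_pos hij
  rw [this]
  exact ⟨(hT i j h1).1, h2⟩

def extD (k : ℕ) (μ : YoungDiagram) (hμ : μ.colLen 0 ≤ k + 1) (m : Fin k → ℕ)
    (hm : m ∈ boxF k (Ltup (k + 1) μ)) (T' : SemistandardYoungTableau (nuD k μ m hm))
    (hb : T' ∈ ssytSet (nuD k μ m hm) k) : SemistandardYoungTableau μ where
  entry i j := if (i, j) ∈ nuD k μ m hm then T' i j else if (i, j) ∈ μ then k + 1 else 0
  row_weak' {i j1 j2} hj hcell := by
    by_cases h2 : (i, j2) ∈ nuD k μ m hm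
    · rw [if_pos h2, if_pos ((nuD k μ m hm).up_left_mem le_rfl (le_of_lt hj) h2)]
      exact T'.row_weak hj h2
    · rw [if_neg h2, if_pos hcell]
      by_cases h1 : (i, j1) ∈ nuD k μ m hm
      · rw [if_pos h1]
        exact le_trans (hb i j1 h1).2 (Nat.le_succ k)
      · rw [if_neg h1]
        split <;> omega
  col_strict' {i1 i2 j} hi hcell := by
    by_cases h2 : (i2, j) ∈ nuD k μ m hm
    · rw [if_pos h2, if_pos ((nuD k μ m hm).up_left_mem (le_of_lt hi) le_rfl h2)]
      exact T'.col_strict hi h2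
    · rw [if_neg h2, if_pos hcell]
      have h1 : (i1, j) ∈ nuD k μ m hm := by
        have hi2 : i2 - 1 + 1 = i2 := by omega
        have hs := nuD_strip hμ hm (i2 - 1) j (by rw [hi2]; exact hcell)
        exact (nuD k μ m hm).up_left_mem (by omega) le_rfl hs
      rw [if_pos h1]
      exact Nat.lt_succ_of_le (hb i1 j h1).2
  zeros' {i j} h := by
    rw [if_neg (fun hc => h (nuD_le hm i j hc)), if_neg h]

lemma extD_apply {k : ℕ} {μ : YoungDiagram} {hμ : μ.colLen 0 ≤ k + 1} {m : Fin k → ℕ}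
    {hm : m ∈ boxF k (Ltup (k + 1) μ)} {T' : SemistandardYoungTableau (nuD k μ m hm)}
    {hb : T' ∈ ssytSet (nuD k μ m hm) k} (i j : ℕ) :
    extD k μ hμ m hm T' hb i j =
      if (i, j) ∈ nuD k μ m hm then T' i j else if (i, j) ∈ μ then k + 1 else 0 := rfl

lemma extD_mem {k : ℕ} {μ : YoungDiagram} (hμ : μ.colLen 0 ≤ k + 1) (m : Fin k → ℕ)
    (hm : m ∈ boxF k (Ltup (k + 1) μ)) (T' : SemistandardYoungTableau (nuD k μ m hm))
    (hb : T' ∈ ssytSet (nuD k μ m hm) k) :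
    extD k μ hμ m hm T' hb ∈ ssytSet μ (k + 1) := by
  intro i j hij
  rw [extD_apply]
  by_cases h : (i, j) ∈ nuD k μ m hm
  · rw [if_pos h]
    exact ⟨(hb i j h).1, le_trans (hb i j h).2 (Nat.le_succ k)⟩
  · rw [if_neg h, if_pos hij]
    omega

lemma nuT_extD {k : ℕ} {μ : YoungDiagram} (hμ : μ.colLen 0 ≤ k + 1) (m : Fin k → ℕ)
    (hm : m ∈ boxF k (Ltup (k + 1) μ)) (T' : SemistandardYoungTableau (nuD k μ m hm))
    (hb : T' ∈ ssytSet (nuD k μ m hm) k) :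
    nuT k μ (extD k μ hμ m hm T' hb) = nuD k μ m hm := by
  apply YD_ext
  intro i j
  rw [mem_nuT]
  constructor
  · rintro ⟨h1, h2⟩
    by_contra h3
    rw [extD_apply, if_neg h3, if_pos h1] at h2
    omega
  · intro h
    refine ⟨nuD_le hm i j h, ?_⟩
    rw [extD_apply, if_pos h]
    exact (hb i j h).2

lemma mOf_extD {k : ℕ} {μ : YoungDiagram} (hμ : μ.colLen 0 ≤ k + 1) (m : Fin k → ℕ)
    (hm : m ∈ boxF k (Ltup (k + 1) μ)) (T' : SemistandardYoungTableau (nuD k μ m hm))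
    (hb : T' ∈ ssytSet (nuD k μ m hm) k) :
    mOf k μ (extD k μ hμ m hm T' hb) = m := by
  have h1 : mOf k μ (extD k μ hμ m hm T' hb) = Ltup k (nuT k μ (extD k μ hμ m hm T' hb)) := rfl
  rw [h1, nuT_extD hμ m hm T' hb, Ltup_nuD hm]

lemma extD_restrD {k : ℕ} {μ : YoungDiagram} (hμ : μ.colLen 0 ≤ k + 1)
    (T : SemistandardYoungTableau μ) (hT : T ∈ ssytSet μ (k + 1)) :
    extD k μ hμ (mOf k μ T) (mOf_mem hT) (restrD T hT) (restrD_mem T hT) = T := by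
  ext i j
  rw [extD_apply]
  by_cases h : (i, j) ∈ nuD k μ (mOf k μ T) (mOf_mem hT)
  · rw [if_pos h]
    exact if_pos h
  · rw [if_neg h]
    by_cases hμm : (i, j) ∈ μ
    · rw [if_pos hμm]
      have h2 : ¬ ((i, j) ∈ μ ∧ T i j ≤ k) := fun hc => h ((mem_nuD_mOf hT i j).mpr hc)
      have h3 := (hT i j hμm).2
      have h4 : ¬ (T i j ≤ k) := fun hc => h2 ⟨hμm, hc⟩
      omega
    · rw [if_neg hμm]
      exact (T.zeros hμm).symm

open Classical in
noncomputable def extTot (k : ℕ) (μ : YoungDiagram) (hμ : μ.colLen 0 ≤ k + 1) (m : Fin k → ℕ)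
    (hm : m ∈ boxF k (Ltup (k + 1) μ)) :
    SemistandardYoungTableau (nuD k μ m hm) → SemistandardYoungTableau μ := fun T' =>
  if h : T' ∈ ssytSet (nuD k μ m hm) k then extD k μ hμ m hm T' h else default

lemma fiber_eq_image (k : ℕ) (μ : YoungDiagram) (hμ : μ.colLen 0 ≤ k + 1) (m : Fin k → ℕ)
    (hm : m ∈ boxF k (Ltup (k + 1) μ)) :
    {T | T ∈ ssytSet μ (k + 1) ∧ mOf k μ T = m} =
      extTot k μ hμ m hm '' (ssytSet (nuD k μ m hm) k) := by
  ext T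
  simp only [Set.mem_setOf_eq, Set.mem_image]
  constructor
  · rintro ⟨hT, hmOf⟩
    subst hmOf
    refine ⟨restrD T hT, restrD_mem T hT, ?_⟩
    simp only [extTot, dif_pos (restrD_mem T hT)]
    exact extD_restrD hμ T hT
  · rintro ⟨T', hT', rfl⟩
    simp only [extTot, dif_pos hT']
    exact ⟨extD_mem hμ m hm T' hT', mOf_extD hμ m hm T' hT'⟩

lemma extTot_injOn (k : ℕ) (μ : YoungDiagram) (hμ : μ.colLen 0 ≤ k + 1) (m : Fin k → ℕ)
    (hm : m ∈ boxF k (Ltup (k + 1) μ)) :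
    Set.InjOn (extTot k μ hμ m hm) (ssytSet (nuD k μ m hm) k) := by
  intro T1 h1 T2 h2 heq
  simp only [extTot, dif_pos h1, dif_pos h2] at heq
  ext i j
  by_cases h : (i, j) ∈ nuD k μ m hm
  · have e1 : extD k μ hμ m hm T1 h1 i j = T1 i j := by rw [extD_apply, if_pos h]
    have e2 : extD k μ hμ m hm T2 h2 i j = T2 i j := by rw [extD_apply, if_pos h]
    rw [← e1, ← e2, heq]
  · rw [T1.zeros h, T2.zeros h]

theorem ssytCount_eq_GTP (k : ℕ) : ∀ (μ : YoungDiagram), μ.colLen 0 ≤ k →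
    ssytCount μ k = GTP k (Ltup k μ) := by
  induction k with
  | zero =>
    intro μ hμ
    have hcells : ∀ i j : ℕ, (i, j) ∉ μ := by
      intro i j hij
      have h1 : (i, 0) ∈ μ := μ.up_left_mem le_rfl (Nat.zero_le j) hij
      have h2 := YoungDiagram.mem_iff_lt_colLen.mp h1
      omega
    have huniv : ssytSet μ 0 = Set.univ := by
      ext T
      simp only [ssytSet, Set.mem_setOf_eq, Set.mem_univ, iff_true]
      intro i j h
      exact absurd h (hcells i j)
    haveI : Subsingleton (SemistandardYoungTableau μ) := by
      constructor
      intro T1 T2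
      ext i j
      rw [T1.zeros (hcells i j), T2.zeros (hcells i j)]
    haveI : Unique (SemistandardYoungTableau μ) := Unique.mk' _
    rw [ssytCount, huniv, Set.ncard_univ, Nat.card_unique]
    rfl
  | succ k ih =>
    intro μ hμ
    classical
    have hpart : ssytSet μ (k + 1) =
        ⋃ m ∈ boxF k (Ltup (k + 1) μ), {T | T ∈ ssytSet μ (k + 1) ∧ mOf k μ T = m} := by
      ext T
      simp only [Set.mem_iUnion, Set.mem_setOf_eq]
      constructor
      · intro hT
        exact ⟨mOf k μ T, mOf_mem hT, hT, rfl⟩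
      · rintro ⟨m, hm, hT, _⟩
        exact hT
    have hGTP : GTP (k + 1) (Ltup (k + 1) μ) = ∑ m ∈ boxF k (Ltup (k + 1) μ), GTP k m := rfl
    rw [ssytCount, hpart, hGTP, ncard_biUnion]
    · refine Finset.sum_congr rfl fun m hm => ?_
      rw [fiber_eq_image k μ hμ m hm, Set.ncard_image_of_injOn (extTot_injOn k μ hμ m hm)]
      have h1 := ih (nuD k μ m hm) (colLen_nuD hm)
      rw [Ltup_nuD hm] at h1
      exact h1
    · intro m hm
      exact Set.Finite.subset (ssytSet_finite μ (k + 1)) (fun T hT => hT.1)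
    · intro m1 h1 m2 h2 hne
      rw [Set.disjoint_left]
      rintro T ⟨_, e1⟩ ⟨_, e2⟩
      exact hne (e1 ▸ e2 ▸ rfl)

lemma mem_lambdaShape {n i j : ℕ} : (i, j) ∈ lambdaShape n ↔ j < n - (i + 1) / 2 := by
  constructor
  · intro h
    exact (Finset.mem_filter.mp h).2
  · intro h
    refine Finset.mem_filter.mpr ⟨?_, h⟩
    simp only [Finset.mem_product, Finset.mem_range]
    omega

lemma rowLen_lambdaShape (n i : ℕ) : (lambdaShape n).rowLen i = n - (i + 1) / 2 :=
  rowLen_eq_of_iff fun _ => mem_lambdaShape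

lemma colLen_lambdaShape (n : ℕ) : (lambdaShape n).colLen 0 ≤ 2 * n + 1 := by
  rw [colLen_le_iff, mem_lambdaShape]
  omega

lemma Ltup_strict (K : ℕ) (μ : YoungDiagram) :
    ∀ i j : Fin K, i < j → Ltup K μ j < Ltup K μ i := by
  intro i j hij
  have h1 := μ.rowLen_anti i j (le_of_lt (Fin.lt_def.mp hij))
  have h2 := j.isLt
  have h3 := Fin.lt_def.mp hij
  unfold Ltup
  omega

lemma Ltup_lambda (n : ℕ) (i : Fin (2 * n + 1)) :
    Ltup (2 * n + 1) (lambdaShape n) i = sfun (2 * n + 1 - 1 - (i : ℕ)) := by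
  have hi := i.isLt
  unfold Ltup sfun
  rw [rowLen_lambdaShape]
  omega

lemma sigma_eq_of_eq {α : Type*} {a c : α} {b d : α} (h1 : a = c) (h2 : b = d) :
    (⟨a, b⟩ : Σ _ : α, α) = ⟨c, d⟩ := by
  subst h1; subst h2; rfl

lemma Dl_reverse (N : ℕ) (w : ℕ → ℚ) :
    Dl N (fun i : Fin N => w (N - 1 - (i : ℕ))) =
      ∏ a ∈ Finset.range N, ∏ b ∈ Finset.range a, (w a - w b) := by
  classical
  calc Dl N (fun i : Fin N => w (N - 1 - (i : ℕ)))
      = ∏ x ∈ (Finset.univ.sigma fun i : Fin N => Finset.Ioi i),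
          (w (N - 1 - (x.1 : ℕ)) - w (N - 1 - (x.2 : ℕ))) :=
        Finset.prod_sigma' Finset.univ (fun i : Fin N => Finset.Ioi i)
          (fun i j => w (N - 1 - (i : ℕ)) - w (N - 1 - (j : ℕ)))
    _ = ∏ y ∈ ((Finset.range N).sigma fun a => Finset.range a), (w y.1 - w y.2) := by
        refine Finset.prod_bij'
          (fun (x : Σ _ : Fin N, Fin N) (_ : x ∈ Finset.univ.sigma fun i : Fin N => Finset.Ioi i) =>
            (⟨N - 1 - (x.1 : ℕ), N - 1 - (x.2 : ℕ)⟩ : Σ _ : ℕ, ℕ))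
          (fun (y : Σ _ : ℕ, ℕ) (hy : y ∈ (Finset.range N).sigma fun a => Finset.range a) =>
            have h1 : y.1 < N ∧ y.2 < y.1 := by
              simpa [Finset.mem_sigma, Finset.mem_range] using hy
            (⟨⟨N - 1 - y.1, by omega⟩, ⟨N - 1 - y.2, by omega⟩⟩ : Σ _ : Fin N, Fin N))
          ?_ ?_ ?_ ?_ ?_
        · intro x hx
          have hx2 := x.2.isLt
          have hlt : x.1 < x.2 := by
            have := (Finset.mem_sigma.mp hx).2
            exact Finset.mem_Ioi.mp this
          simp only [Finset.mem_sigma, Finset.mem_range]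
          constructor
          · omega
          · have := Fin.lt_def.mp hlt
            omega
        · intro y hy
          simp only [Finset.mem_sigma, Finset.mem_univ, true_and, Finset.mem_Ioi]
          have h1 : y.1 < N ∧ y.2 < y.1 := by
            simpa [Finset.mem_sigma, Finset.mem_range] using hy
          rw [Fin.lt_def]
          simp only
          omega
        · intro x hx
          have hx2 := x.2.isLt
          have hx1 := x.1.isLt
          apply sigma_eq_of_eq <;> (apply Fin.ext; simp only; omega)
        · intro y hy
          have h1 : y.1 < N ∧ y.2 < y.1 := by
            simpa [Finset.mem_sigma, Finset.mem_range] using hy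
          apply sigma_eq_of_eq <;> (simp only; omega)
        · intro x hx
          rfl
    _ = ∏ a ∈ Finset.range N, ∏ b ∈ Finset.range a, (w a - w b) :=
        (Finset.prod_sigma' (Finset.range N) (fun a => Finset.range a) (fun a b => w a - w b)).symm

lemma Dl_eq_Dn (n : ℕ) :
    Dl (2 * n + 1) (fun i : Fin (2 * n + 1) => ((Ltup (2 * n + 1) (lambdaShape n) i : ℕ) : ℚ)) =
      (Dn n : ℚ) := by
  have h1 : (fun i : Fin (2 * n + 1) => ((Ltup (2 * n + 1) (lambdaShape n) i : ℕ) : ℚ)) =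
      (fun i : Fin (2 * n + 1) =>
        (fun t : ℕ => ((sfun t : ℕ) : ℚ)) (2 * n + 1 - 1 - (i : ℕ))) := by
    funext i
    rw [Ltup_lambda]
  rw [h1, Dl_reverse (2 * n + 1) (fun t : ℕ => ((sfun t : ℕ) : ℚ))]
  rw [Dn, Nat.cast_prod]
  refine Finset.prod_congr rfl fun a _ => ?_
  rw [Nat.cast_prod]
  refine Finset.prod_congr rfl fun b hb => ?_
  have hmono := sfun_mono (Finset.mem_range.mp hb)
  rw [Nat.cast_sub (le_of_lt hmono)]

/-- The number of semistandard Young tableaux of shape `(n, n-1, n-1, …, 2, 2, 1, 1)` with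
entries from `{1, …, 2n+1}` equals `3^{n(n-1)/2} · ∏_{i=0}^{n} (3i)!/(n+i)!`. -/
theorem ssyt_staircase_count (n : ℕ) (hn : 1 ≤ n) :
    ssytCount (lambdaShape n) (2*n+1) * ∏ i ∈ Finset.range (n+1), (n + i).factorial =
      3 ^ (n * (n - 1) / 2) * ∏ i ∈ Finset.range (n+1), (3 * i).factorial := by
  have h1 : ssytCount (lambdaShape n) (2 * n + 1) =
      GTP (2 * n + 1) (Ltup (2 * n + 1) (lambdaShape n)) :=
    ssytCount_eq_GTP (2 * n + 1) (lambdaShape n) (colLen_lambdaShape n)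
  have h2 := GTP_formula (2 * n + 1) (Ltup (2 * n + 1) (lambdaShape n))
    (Ltup_strict (2 * n + 1) (lambdaShape n))
  rw [Dl_eq_Dn n, ← h1] at h2
  have h3 : (∏ t ∈ Finset.range (2 * n + 1), t.factorial) *
      ssytCount (lambdaShape n) (2 * n + 1) = Dn n := by
    exact_mod_cast h2
  have h4 := main3 n
  have hFt : 0 < ∏ t ∈ Finset.range (2 * n + 1), t.factorial :=
    Finset.prod_pos fun t _ => t.factorial_pos
  apply Nat.eq_of_mul_eq_mul_right hFt
  calc ssytCount (lambdaShape n) (2 * n + 1) * (∏ i ∈ Finset.range (n + 1), (n + i).factorial) *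
        (∏ t ∈ Finset.range (2 * n + 1), t.factorial)
      = ((∏ t ∈ Finset.range (2 * n + 1), t.factorial) *
          ssytCount (lambdaShape n) (2 * n + 1)) *
          (∏ i ∈ Finset.range (n + 1), (n + i).factorial) := by ring
    _ = Dn n * ∏ i ∈ Finset.range (n + 1), (n + i).factorial := by rw [h3]
    _ = 3 ^ (n * (n - 1) / 2) * (∏ i ∈ Finset.range (n + 1), (3 * i).factorial) *
          ∏ t ∈ Finset.range (2 * n + 1), t.factorial := h4
    _ = _ := by ring
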